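/- Let k ≥ 1 and let S^{2k+1} be the unit sphere in ℂ^{k+1} ≅ ℝ^{2k+2}, with H the Hopf vector field H(x) = ix. Then at every point x ∈ S^{2k+1}, the squared norm of the covariant derivative of H satisfies ‖∇H‖²(x) = Σ_a ‖∇_{e_a} H‖² = 2k, where (e_a), a = 1, …, 2k+1, is any orthonormal basis of T_x S^{2k+1}. Consequently, for any measurable K ⊆ S^{2k+1}, the energy of H on K is E(H) = ((2k+1)/2 + k)·vol(K). -/

import Mathlib

open MeasureTheory Metric Finset
open scoped RealInnerProductSpace

noncomputable section

/-- `ℝⁿ` as a Euclidean space. -/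
abbrev Euc (n : ℕ) : Type := EuclideanSpace ℝ (Fin n)

/-- The unit sphere `Sⁿ⁻¹ ⊆ ℝⁿ`. -/
def unitSphere (n : ℕ) : Set (Euc n) := Metric.sphere (0 : Euc n) 1

/-- Orthogonal projection of `ℝⁿ` onto the tangent space `x^⊥ = T_x Sⁿ⁻¹` of the unit
sphere at `x`, regarded as a map `ℝⁿ → ℝⁿ`. -/
def tangProj (n : ℕ) (x : Euc n) : Euc n →L[ℝ] Euc n :=
  (Submodule.span ℝ {x})ᗮ.subtypeL ∘L Submodule.orthogonalProjectionOnto (Submodule.span ℝ {x})ᗮ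

/-- The covariant derivative (in the Levi-Civita connection of the round sphere) of a
tangent vector field `v` at `x`, as a linear operator `Y ↦ ∇_Y v` on `ℝⁿ`:
the derivative of `v` within the sphere in the tangent direction, followed by orthogonal
projection onto the tangent space `x^⊥`.  It vanishes on `(T_x S)^⊥` and takes values in
`T_x S`, so it represents the operator `∇v : T_x S → T_x S`. -/
def covOp (n : ℕ) (v : Euc n → Euc n) (x : Euc n) : Euc n →L[ℝ] Euc n :=
  tangProj n x ∘L fderivWithin ℝ v (unitSphere n) x ∘L tangProj n x

/-- `v` is solenoidal (divergence free) on `U`: the trace of `Y ↦ ∇_Y v` on `T_x S`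
vanishes at every `x ∈ U` (as `covOp` vanishes on `(T_x S)^⊥` and maps into `T_x S`,
its trace on the ambient space equals its trace on `T_x S`). -/
def Solenoidal (n : ℕ) (v : Euc n → Euc n) (U : Set (Euc n)) : Prop :=
  ∀ x ∈ U, LinearMap.trace ℝ (Euc n) (covOp n v x : Euc n →ₗ[ℝ] Euc n) = 0

/-- `‖∇v‖²(x) = Σ_a ‖∇_{e_a} v‖²`: the squared Hilbert–Schmidt norm of `∇v` at `x`,
computed with an orthonormal basis of `ℝⁿ` (this agrees with the sum over an orthonormal
basis of `T_x S` since `covOp` vanishes on `(T_x S)^⊥`). -/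
def gradSq (n : ℕ) (v : Euc n → Euc n) (x : Euc n) : ℝ :=
  ∑ i : Fin n, ‖covOp n v x (EuclideanSpace.basisFun (Fin n) ℝ i)‖ ^ 2

/-- The energy of the unit vector field `v` on `K ⊆ S^{2k+1}`:
`E(v) = ((2k+1)/2)·vol(K) + (1/2)∫_K ‖∇v‖²`, with `vol` the `(2k+1)`-dimensional
Hausdorff measure. -/
def energyOn (k : ℕ) (v : Euc (2 * k + 2) → Euc (2 * k + 2)) (K : Set (Euc (2 * k + 2))) : ℝ :=
  ((2 * (k : ℝ) + 1) / 2) * (μH[(2 * (k : ℝ) + 1)] K).toReal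
    + (1 / 2) * ∫ x in K, gradSq (2 * k + 2) v x ∂(μH[(2 * (k : ℝ) + 1)])

/-- The Hopf vector field `H(x) = ix` on `ℝ^{2k+2} ≅ ℂ^{k+1}`, where the identification
pairs the coordinates as `(x₀, x₁), (x₂, x₃), …`: on each pair `(a, b) = a + bi` we have
`i(a+bi) = -b + ai`. -/
def hopf (k : ℕ) (x : Euc (2 * k + 2)) : Euc (2 * k + 2) := WithLp.toLp 2 fun i =>
  if h : (i : ℕ) % 2 = 0 then -x ⟨(i : ℕ) + 1, by have := i.isLt; omega⟩
  else x ⟨(i : ℕ) - 1, by have := i.isLt; omega⟩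

/-- The boundary `∂K` of a full-dimensional compact submanifold-with-boundary
`K` of the unit sphere: its topological frontier relative to the sphere. -/
def relFrontier (n : ℕ) (K : Set (Euc n)) : Set (Euc n) :=
  closure K ∩ closure (unitSphere n \ K)

/-- `U` is an open subset of the unit sphere `Sⁿ⁻¹` (in the subspace topology). -/
def IsOpenInSphere (n : ℕ) (U : Set (Euc n)) : Prop :=
  U ⊆ unitSphere n ∧ ∃ V : Set (Euc n), IsOpen V ∧ U = V ∩ unitSphere n



namespace HopfAux

def sig (k : ℕ) (i : Fin (2*k+2)) : Fin (2*k+2) :=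
  if h : (i : ℕ) % 2 = 0 then ⟨(i : ℕ) + 1, by have := i.isLt; omega⟩
  else ⟨(i : ℕ) - 1, by have := i.isLt; omega⟩

def eps (k : ℕ) (i : Fin (2*k+2)) : ℝ := if (i : ℕ) % 2 = 0 then -1 else 1

lemma hopf_apply (k : ℕ) (x : Euc (2*k+2)) (i : Fin (2*k+2)) :
    hopf k x i = eps k i * x (sig k i) := by
  by_cases h : (i : ℕ) % 2 = 0
  · rw [show hopf k x i = -x ⟨(i : ℕ) + 1, by have := i.isLt; omega⟩ from dif_pos h]
    rw [show sig k i = ⟨(i : ℕ) + 1, by have := i.isLt; omega⟩ from dif_pos h]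
    rw [show eps k i = -1 from if_pos h]
    rw [neg_one_mul]
  · rw [show hopf k x i = x ⟨(i : ℕ) - 1, by have := i.isLt; omega⟩ from dif_neg h]
    rw [show sig k i = ⟨(i : ℕ) - 1, by have := i.isLt; omega⟩ from dif_neg h]
    rw [show eps k i = 1 from if_neg h]
    rw [one_mul]

lemma sig_val_even {k : ℕ} {i : Fin (2*k+2)} (h : (i : ℕ) % 2 = 0) :
    (sig k i : ℕ) = (i : ℕ) + 1 := by
  rw [show sig k i = ⟨(i : ℕ) + 1, by have := i.isLt; omega⟩ from dif_pos h]

lemma sig_val_odd {k : ℕ} {i : Fin (2*k+2)} (h : ¬ (i : ℕ) % 2 = 0) :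
    (sig k i : ℕ) = (i : ℕ) - 1 := by
  rw [show sig k i = ⟨(i : ℕ) - 1, by have := i.isLt; omega⟩ from dif_neg h]

lemma sig_sig (k : ℕ) : Function.Involutive (sig k) := by
  intro i
  apply Fin.ext
  by_cases h : (i : ℕ) % 2 = 0
  · have h1 := sig_val_even (k := k) h
    have h2 : ¬ (sig k i : ℕ) % 2 = 0 := by omega
    rw [sig_val_odd h2, h1]
    omega
  · have h1 := sig_val_odd (k := k) h
    have h2 : (sig k i : ℕ) % 2 = 0 := by omega
    rw [sig_val_even h2, h1]
    omega

lemma eps_sig (k : ℕ) (i : Fin (2*k+2)) : eps k (sig k i) = - eps k i := by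
  by_cases h : (i : ℕ) % 2 = 0
  · have h2 : ¬ (sig k i : ℕ) % 2 = 0 := by have := sig_val_even (k := k) h; omega
    simp [eps, h, h2]
  · have h2 : (sig k i : ℕ) % 2 = 0 := by have := sig_val_odd (k := k) h; omega
    simp [eps, h, h2]

lemma eps_sq (k : ℕ) (i : Fin (2*k+2)) : eps k i * eps k i = 1 := by
  by_cases h : (i : ℕ) % 2 = 0 <;> simp [eps, h]

lemma hopf_hopf (k : ℕ) (x : Euc (2*k+2)) : hopf k (hopf k x) = -x := by
  ext i
  have : (-x) i = -(x i) := rfl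
  rw [this, hopf_apply, hopf_apply, eps_sig, sig_sig]
  linear_combination (-(x i)) * eps_sq k i

lemma inner_euc {m : ℕ} (a b : Euc m) : ⟪a, b⟫ = ∑ i, a i * b i := by
  simp [PiLp.inner_apply, RCLike.inner_apply, conj_trivial, mul_comm]

lemma inner_hopf_left (k : ℕ) (x y : Euc (2*k+2)) :
    ⟪hopf k x, y⟫ = -⟪x, hopf k y⟫ := by
  have hbij : Function.Bijective (sig k) := (sig_sig k).bijective
  rw [inner_euc, inner_euc, ← hbij.sum_comp (fun i => hopf k x i * y i), ← Finset.sum_neg_distrib]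
  apply Finset.sum_congr rfl
  intro i _
  rw [hopf_apply, hopf_apply, eps_sig, sig_sig]
  ring

lemma inner_hopf_hopf (k : ℕ) (x y : Euc (2*k+2)) :
    ⟪hopf k x, hopf k y⟫ = ⟪x, y⟫ := by
  rw [inner_hopf_left, hopf_hopf, inner_neg_right, neg_neg]

lemma inner_hopf_self (k : ℕ) (x : Euc (2*k+2)) : ⟪x, hopf k x⟫ = 0 := by
  have h := inner_hopf_left k x x
  have h2 : ⟪hopf k x, x⟫ = ⟪x, hopf k x⟫ := real_inner_comm _ _
  linarith [h, h2]

lemma norm_hopf (k : ℕ) (x : Euc (2*k+2)) : ‖hopf k x‖ = ‖x‖ := by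
  have h : ‖hopf k x‖^2 = ‖x‖^2 := by
    rw [← real_inner_self_eq_norm_sq, ← real_inner_self_eq_norm_sq, inner_hopf_hopf]
  have := congrArg Real.sqrt h
  rwa [Real.sqrt_sq (norm_nonneg _), Real.sqrt_sq (norm_nonneg _)] at this

lemma hopf_sub (k : ℕ) (x y : Euc (2*k+2)) : hopf k (x - y) = hopf k x - hopf k y := by
  ext i
  have h1 : (x - y) (sig k i) = x (sig k i) - y (sig k i) := rfl
  have h2 : (hopf k x - hopf k y) i = hopf k x i - hopf k y i := rfl
  rw [h2, hopf_apply, hopf_apply, hopf_apply, h1]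
  ring

lemma hopf_smul (k : ℕ) (c : ℝ) (x : Euc (2*k+2)) : hopf k (c • x) = c • hopf k x := by
  ext i
  have h1 : (c • x) (sig k i) = c * x (sig k i) := rfl
  have h2 : (c • hopf k x) i = c * hopf k x i := rfl
  rw [h2, hopf_apply, hopf_apply, h1]
  ring

def Jlin (k : ℕ) : Euc (2*k+2) →ₗ[ℝ] Euc (2*k+2) where
  toFun := hopf k
  map_add' x y := by
    ext i
    have h1 : (x + y) (sig k i) = x (sig k i) + y (sig k i) := rfl
    have h2 : (hopf k x + hopf k y) i = hopf k x i + hopf k y i := rfl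
    rw [h2, hopf_apply, hopf_apply, hopf_apply, h1]; ring
  map_smul' c x := by
    simpa using hopf_smul k c x

def Jc (k : ℕ) : Euc (2*k+2) →L[ℝ] Euc (2*k+2) := (Jlin k).toContinuousLinearMap

lemma Jc_apply (k : ℕ) (x : Euc (2*k+2)) : Jc k x = hopf k x := rfl

end HopfAux

open scoped Topology

namespace HopfAux

lemma tangProj_apply {m : ℕ} {x : Euc m} (hx : ‖x‖ = 1) (z : Euc m) :
    tangProj m x z = z - ⟪x, z⟫ • x := by
  have h1 : (Submodule.span ℝ {x}).starProjection z = ⟪x, z⟫ • x := by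
    rw [Submodule.starProjection_singleton, hx]
    norm_num
  show (Submodule.span ℝ {x})ᗮ.starProjection z = _
  rw [Submodule.starProjection_orthogonal_val, h1]

lemma mem_tangentCone {m : ℕ} {x u : Euc m} (hx : ‖x‖ = 1) (hu : ‖u‖ = 1)
    (hxu : ⟪x, u⟫ = 0) : u ∈ tangentConeAt ℝ (unitSphere m) x := by
  set γ : ℝ → Euc m := fun t => (Real.sqrt (1 + t^2))⁻¹ • (x + t • u) with hγ
  have hmem : ∀ t, γ t ∈ unitSphere m := by
    intro t
    have hsq : ‖x + t • u‖^2 = 1 + t^2 := by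
      rw [norm_add_sq_real, real_inner_smul_right, hxu, norm_smul, hx, hu]
      simp [sq_abs]
    have hnorm : ‖x + t • u‖ = Real.sqrt (1 + t^2) := by
      rw [← hsq, Real.sqrt_sq (norm_nonneg _)]
    have hpos : (0:ℝ) < Real.sqrt (1 + t^2) := Real.sqrt_pos.mpr (by positivity)
    show γ t ∈ Metric.sphere (0 : Euc m) 1
    rw [mem_sphere_zero_iff_norm, hγ]
    rw [norm_smul, hnorm, Real.norm_eq_abs, abs_inv, abs_of_pos hpos]
    exact inv_mul_cancel₀ hpos.ne'
  have hγ0 : γ 0 = x := by simp [hγ]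
  have hderiv : HasDerivAt γ u 0 := by
    have h1 : HasDerivAt (fun t : ℝ => 1 + t^2) 0 0 := by
      simpa using (hasDerivAt_pow 2 (0:ℝ)).const_add 1
    have h2 : HasDerivAt (fun t : ℝ => Real.sqrt (1 + t^2)) 0 0 := by
      simpa using h1.sqrt (by norm_num)
    have h3 : HasDerivAt (fun t : ℝ => (Real.sqrt (1 + t^2))⁻¹) 0 0 := by
      simpa using h2.fun_inv (by norm_num)
    have h4 : HasDerivAt (fun t : ℝ => x + t • u) u 0 := by
      simpa using ((hasDerivAt_id (0:ℝ)).smul_const u).const_add x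
    have h5 : HasDerivAt γ ((Real.sqrt (1+(0:ℝ)^2))⁻¹ • u + (0:ℝ) • (x + (0:ℝ) • u)) 0 :=
      h3.smul h4
    simpa using h5
  refine mem_tangentConeAt_iff_exists_seq_norm_tendsto_atTop.2
    ⟨fun n => ((n : ℝ) + 1), fun n => γ (((n : ℝ) + 1)⁻¹) - x, ?_, ?_, ?_⟩
  swap
  · exact Filter.Eventually.of_forall fun n => by simpa using hmem _
  · apply Filter.Tendsto.congr (f₁ := fun n : ℕ => (n : ℝ) + 1)
    · intro n
      rw [Real.norm_of_nonneg (by positivity)]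
    · exact Filter.tendsto_atTop_add_const_right _ 1 tendsto_natCast_atTop_atTop
  · have hslope := hderiv.tendsto_slope_zero
    have ht : Filter.Tendsto (fun n : ℕ => ((n : ℝ) + 1)⁻¹) Filter.atTop (𝓝[≠] 0) := by
      rw [tendsto_nhdsWithin_iff]
      constructor
      · simpa [one_div] using tendsto_one_div_add_atTop_nhds_zero_nat (𝕜 := ℝ)
      · exact Filter.Eventually.of_forall fun n => by
          simp only [Set.mem_compl_iff, Set.mem_singleton_iff]
          positivity
    have hcomp := hslope.comp ht
    refine hcomp.congr fun n => ?_
    simp only [Function.comp_apply, zero_add, hγ0, inv_inv]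

lemma fderivWithin_hopf (k : ℕ) {x : Euc (2*k+2)} (hx1 : ‖x‖ = 1) {y : Euc (2*k+2)}
    (hy : ⟪x, y⟫ = 0) :
    fderivWithin ℝ (hopf k) (unitSphere (2*k+2)) x y = hopf k y := by
  have hJ : HasFDerivWithinAt (hopf k) (Jc k) (unitSphere (2*k+2)) x :=
    ((Jc k).hasFDerivAt).hasFDerivWithinAt
  have hd : DifferentiableWithinAt ℝ (hopf k) (unitSphere (2*k+2)) x := ⟨Jc k, hJ⟩
  have hF := hd.hasFDerivWithinAt
  have heq := hF.unique_on hJ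
  rcases eq_or_ne y 0 with rfl | hy0
  · have h0 : hopf k (0 : Euc (2*k+2)) = 0 := by rw [← Jc_apply]; exact map_zero _
    rw [h0]; exact map_zero _
  · have hu1 : ‖‖y‖⁻¹ • y‖ = 1 := norm_smul_inv_norm hy0
    have hu2 : ⟪x, ‖y‖⁻¹ • y⟫ = 0 := by rw [real_inner_smul_right, hy, mul_zero]
    have h1 : fderivWithin ℝ (hopf k) (unitSphere (2*k+2)) x (‖y‖⁻¹ • y)
        = Jc k (‖y‖⁻¹ • y) := heq (mem_tangentCone hx1 hu1 hu2)
    rw [ContinuousLinearMap.map_smul, ContinuousLinearMap.map_smul] at h1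
    have hc : (‖y‖ : ℝ)⁻¹ ≠ 0 := inv_ne_zero (norm_ne_zero_iff.mpr hy0)
    have := smul_right_injective (Euc (2*k+2)) hc h1
    rw [this, Jc_apply]

lemma covOp_hopf_apply (k : ℕ) {x : Euc (2*k+2)} (hx1 : ‖x‖ = 1) (z : Euc (2*k+2)) :
    (tangProj (2*k+2) x ∘L fderivWithin ℝ (hopf k) (unitSphere (2*k+2)) x
        ∘L tangProj (2*k+2) x) z
      = (hopf k z - ⟪x, z⟫ • hopf k x) + ⟪hopf k x, z⟫ • x := by
  have horth : ⟪x, z - ⟪x, z⟫ • x⟫ = 0 := by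
    rw [inner_sub_right, real_inner_smul_right, real_inner_self_eq_norm_sq, hx1]
    ring
  rw [ContinuousLinearMap.comp_apply, ContinuousLinearMap.comp_apply,
    tangProj_apply hx1, tangProj_apply hx1, fderivWithin_hopf k hx1 horth,
    hopf_sub, hopf_smul]
  have hxin : ⟪x, hopf k z - ⟪x, z⟫ • hopf k x⟫ = -⟪hopf k x, z⟫ := by
    rw [inner_sub_right, real_inner_smul_right, inner_hopf_self, mul_zero, sub_zero]
    have := inner_hopf_left k x z
    have h2 : ⟪x, hopf k z⟫ = -⟪hopf k x, z⟫ := by linarith [this]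
    linarith [h2]
  rw [hxin]
  module

end HopfAux

namespace HopfAux

lemma norm_sq_w (k : ℕ) {x e : Euc (2*k+2)} (hx1 : ‖x‖ = 1) (he1 : ‖e‖ = 1)
    (a b : ℝ) (ha : ⟪x, e⟫ = a) (hb : ⟪hopf k x, e⟫ = b) :
    ‖(hopf k e - a • hopf k x) + b • x‖^2 = 1 - a^2 - b^2 := by
  have hxx : ⟪x, x⟫ = 1 := by rw [real_inner_self_eq_norm_sq, hx1]; norm_num
  have hee : ⟪e, e⟫ = 1 := by rw [real_inner_self_eq_norm_sq, he1]; norm_num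
  have hAA : ⟪hopf k e, hopf k e⟫ = 1 := by rw [inner_hopf_hopf]; exact hee
  have hBB : ⟪hopf k x, hopf k x⟫ = 1 := by rw [inner_hopf_hopf]; exact hxx
  have hex : ⟪e, x⟫ = a := by rw [real_inner_comm]; exact ha
  have hAB : ⟪hopf k e, hopf k x⟫ = a := by rw [inner_hopf_hopf]; exact hex
  have hBA : ⟪hopf k x, hopf k e⟫ = a := by rw [real_inner_comm]; exact hAB
  have hxB : ⟪x, hopf k x⟫ = 0 := inner_hopf_self k x
  have hBx : ⟪hopf k x, x⟫ = 0 := by rw [real_inner_comm]; exact hxB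
  have heB : ⟪e, hopf k x⟫ = b := by rw [real_inner_comm]; exact hb
  have hAx : ⟪hopf k e, x⟫ = -b := by rw [inner_hopf_left, heB]
  have hxA : ⟪x, hopf k e⟫ = -b := by rw [real_inner_comm]; exact hAx
  rw [← real_inner_self_eq_norm_sq]
  simp only [inner_add_left, inner_add_right, inner_sub_left, inner_sub_right,
    real_inner_smul_left, real_inner_smul_right]
  rw [hAA, hBB, hAB, hBA, hxx, hxB, hBx, hAx, hxA]
  ring

lemma sum_sq_coords {m : ℕ} (y : Euc m) (hy : ‖y‖ = 1) : ∑ i, (y i)^2 = 1 := by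
  have h1 : ⟪y, y⟫ = 1 := by rw [real_inner_self_eq_norm_sq, hy]; norm_num
  have h2 := HopfAux.inner_euc y y
  rw [h1] at h2
  calc ∑ i, (y i)^2 = ∑ i, y i * y i := by
        apply Finset.sum_congr rfl; intro i _; ring
    _ = 1 := h2.symm

end HopfAux

/-- For the Hopf vector field `H(x) = ix` on `S^{2k+1}` (`k ≥ 1`),
the squared norm of the covariant derivative satisfies `‖∇H‖²(x) = 2k` at every point
`x` of the sphere, and consequently for every measurable `K ⊆ S^{2k+1}` the energy of
`H` on `K` is `E(H) = ((2k+1)/2 + k)·vol(K)`. -/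
theorem hopf_gradSq_eq_and_energy (k : ℕ) (hk : 1 ≤ k) :
    (∀ x ∈ unitSphere (2 * k + 2), gradSq (2 * k + 2) (hopf k) x = 2 * (k : ℝ)) ∧
      ∀ K : Set (Euc (2 * k + 2)), MeasurableSet K → K ⊆ unitSphere (2 * k + 2) →
        energyOn k (hopf k) K
          = ((2 * (k : ℝ) + 1) / 2 + k) * (μH[(2 * (k : ℝ) + 1)] K).toReal := by
  have h1 : ∀ x ∈ unitSphere (2 * k + 2), gradSq (2 * k + 2) (hopf k) x = 2 * (k : ℝ) := by
    intro x hx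
    have hx1 : ‖x‖ = 1 := by
      simpa [unitSphere, mem_sphere_zero_iff_norm] using hx
    have hhx1 : ‖hopf k x‖ = 1 := by rw [HopfAux.norm_hopf, hx1]
    have hterm : ∀ i : Fin (2*k+2),
        ‖covOp (2*k+2) (hopf k) x (EuclideanSpace.basisFun (Fin (2*k+2)) ℝ i)‖^2
          = 1 - (x i)^2 - (hopf k x i)^2 := by
      intro i
      set e := (EuclideanSpace.basisFun (Fin (2*k+2)) ℝ i : Euc (2*k+2)) with he
      have he1 : ‖e‖ = 1 := (EuclideanSpace.basisFun (Fin (2*k+2)) ℝ).orthonormal.1 i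
      have ha : ⟪x, e⟫ = x i := by
        simp [he, EuclideanSpace.basisFun_apply, EuclideanSpace.inner_single_right]
      have hb : ⟪hopf k x, e⟫ = hopf k x i := by
        simp [he, EuclideanSpace.basisFun_apply, EuclideanSpace.inner_single_right]
      have hcov : covOp (2*k+2) (hopf k) x e
          = (hopf k e - ⟪x, e⟫ • hopf k x) + ⟪hopf k x, e⟫ • x := by
        simp only [covOp]
        exact HopfAux.covOp_hopf_apply k hx1 e
      rw [hcov, ha, hb]
      exact HopfAux.norm_sq_w k hx1 he1 _ _ ha hb
    have hsum : ∑ i : Fin (2*k+2), ((1:ℝ) - (x i)^2 - (hopf k x i)^2) = 2*(k:ℝ) := by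
      rw [Finset.sum_sub_distrib, Finset.sum_sub_distrib, Finset.sum_const, card_univ,
        Fintype.card_fin, HopfAux.sum_sq_coords x hx1, HopfAux.sum_sq_coords (hopf k x) hhx1,
        nsmul_eq_mul]
      push_cast
      ring
    calc gradSq (2*k+2) (hopf k) x
        = ∑ i : Fin (2*k+2), ((1:ℝ) - (x i)^2 - (hopf k x i)^2) :=
          Finset.sum_congr rfl (fun i _ => hterm i)
      _ = 2*(k:ℝ) := hsum
  refine ⟨h1, ?_⟩
  intro K hK hKs
  unfold energyOn
  have hint : (∫ x in K, gradSq (2*k+2) (hopf k) x ∂(μH[(2*(k:ℝ)+1)]))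
      = ∫ _ in K, (2*(k:ℝ)) ∂(μH[(2*(k:ℝ)+1)]) :=
    setIntegral_congr_fun hK (fun x hx => h1 x (hKs hx))
  rw [hint, setIntegral_const, smul_eq_mul, measureReal_def]
  ring
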